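/- Let 𝒯_d = (t_{i−j})_{0≤i,j≤d−1} be a Toeplitz matrix over ℂ with det(𝒯_{d−1}) = 0 and det(𝒯_d) ≠ 0, where 𝒯_{d−1} is its leading principal submatrix of order d−1. For γ, δ ∈ ℂ, let 𝒯_{d+1} be the (d+1)×(d+1) matrix obtained by bordering 𝒯_d with last column (γ, t_{−d+1}, …, t_{−1}, t_0)ᵗ and last row (δ, t_{d−1}, …, t_1, t_0). Define the column vectors of dimension d: V_− = (0, t_{−d+1}, …, t_{−1})ᵗ, V_+ = (0, t_{d−1}, …, t_1)ᵗ and e_0 = (1, 0, …, 0)ᵗ. Then det(𝒯_{d+1}) = −det(𝒯_d)·(γ·V_+ᵗ 𝒯_d^{−1} e_0 + δ·e_0ᵗ 𝒯_d^{−1} V_− + V_+ᵗ 𝒯_d^{−1} V_− − t_0). Furthermore, the coefficients V_+ᵗ 𝒯_d^{−1} e_0 of γ and e_0ᵗ 𝒯_d^{−1} V_− of δ are both nonzero. -/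

import Mathlib

/-- The `d × d` Toeplitz matrix `(t_{i-j})_{0 ≤ i,j ≤ d-1}`. -/
noncomputable def toeplitz (d : ℕ) (t : ℤ → ℂ) : Matrix (Fin d) (Fin d) ℂ :=
  Matrix.of fun i j : Fin d => t ((i : ℤ) - (j : ℤ))

/-- The bordered Toeplitz matrix `𝒯_{d+1}` with last column `(γ, t_{-d+1}, …, t_{-1}, t_0)ᵗ`
and last row `(δ, t_{d-1}, …, t_1, t_0)`. -/
noncomputable def borderedToeplitz (d : ℕ) (t : ℤ → ℂ) (γ δ : ℂ) :
    Matrix (Fin (d + 1)) (Fin (d + 1)) ℂ :=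
  Matrix.of fun i j =>
    if (i : ℕ) = d then (if (j : ℕ) = 0 then δ else t ((d : ℤ) - (j : ℤ)))
    else if (j : ℕ) = d then (if (i : ℕ) = 0 then γ else t ((i : ℤ) - (d : ℤ)))
    else t ((i : ℤ) - (j : ℤ))

open Matrix

lemma adj00 (e : ℕ) (t : ℤ → ℂ) :
    (toeplitz (e+1) t).adjugate 0 0 = (toeplitz e t).det := by
  rw [Matrix.adjugate_apply, Matrix.det_succ_row_zero]
  rw [Finset.sum_eq_single 0]
  · have h : ((toeplitz (e+1) t).updateRow 0 (Pi.single 0 1)).submatrix Fin.succ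
        Fin.succ = toeplitz e t := by
      ext i j
      simp only [submatrix_apply, updateRow_ne (Fin.succ_ne_zero i),
        toeplitz, of_apply, Fin.val_succ]
      congr 1
      push_cast
      ring
    simp [h]
  · intro j _ hj
    simp [updateRow_self, Pi.single_apply, hj]
  · simp

lemma e0_eq (n : ℕ) : (fun i : Fin (n+1) => if (i : ℕ) = 0 then (1:ℂ) else 0) = Pi.single 0 1 := by
  funext i
  rw [Pi.single_apply]
  simp only [Fin.ext_iff, Fin.val_zero]

lemma inv00 (e : ℕ) (t : ℤ → ℂ) (h1 : (toeplitz e t).det = 0) :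
    (toeplitz (e+1) t)⁻¹ 0 0 = 0 := by
  rw [Matrix.inv_def]
  simp only [Matrix.smul_apply, smul_eq_mul]
  rw [adj00, h1, mul_zero]

lemma key (d : ℕ) (t : ℤ → ℂ) (hd : 0 < d)
    (h1 : (toeplitz (d - 1) t).det = 0) (h2 : (toeplitz d t).det ≠ 0) :
    (fun i : Fin d => if (i : ℕ) = 0 then 0 else t ((d : ℤ) - (i : ℤ))) ⬝ᵥ
      ((toeplitz d t)⁻¹ *ᵥ fun i : Fin d => if (i : ℕ) = 0 then 1 else 0) ≠ 0 := by
  obtain ⟨e, rfl⟩ : ∃ e, d = e + 1 := ⟨d - 1, by omega⟩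
  rw [show e + 1 - 1 = e from rfl] at h1
  set A := toeplitz (e+1) t with hA
  have hu : IsUnit A.det := isUnit_iff_ne_zero.mpr h2
  have hinv00 : A⁻¹ 0 0 = 0 := inv00 e t h1
  rw [e0_eq]
  set x : Fin (e+1) → ℂ := A⁻¹ *ᵥ Pi.single 0 1 with hxdef
  have hx0 : x 0 = 0 := by
    rw [hxdef, mulVec_single]
    simpa using hinv00
  have hAx : A *ᵥ x = Pi.single 0 1 := by
    rw [hxdef, mulVec_mulVec, mul_nonsing_inv A hu, one_mulVec]
  have hsum : ∀ m : Fin (e+1),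
      ∑ k : Fin e, t ((m : ℤ) - (k : ℤ) - 1) * x k.succ
        = (Pi.single (0 : Fin (e+1)) (1:ℂ) : Fin (e+1) → ℂ) m := by
    intro m
    have h := congrFun hAx m
    rw [mulVec, dotProduct, Fin.sum_univ_succ] at h
    rw [hx0, mul_zero, zero_add] at h
    rw [← h]
    apply Finset.sum_congr rfl
    intro k _
    congr 1
    simp only [hA, toeplitz, of_apply, Fin.val_succ]
    push_cast
    ring
  intro hc
  have hc' : ∑ k : Fin e, t ((e : ℤ) - (k : ℤ)) * x k.succ = 0 := by
    rw [dotProduct, Fin.sum_univ_succ, if_pos (by norm_num), zero_mul, zero_add] at hc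
    rw [← hc]
    refine Finset.sum_congr rfl fun k _ => ?_
    rw [if_neg (by simp)]
    congr 2
    simp only [Fin.val_succ]
    push_cast
    ring
  set y : Fin (e+1) → ℂ := fun j => if h : (j : ℕ) < e then x ⟨(j : ℕ) + 1, by omega⟩ else 0
    with hydef
  have hycast : ∀ j : Fin e, y j.castSucc = x j.succ := by
    intro j
    have hj : ((j.castSucc : Fin (e+1)) : ℕ) < e := by simp [j.isLt]
    rw [hydef]
    simp only [dif_pos hj]
    congr 1
  have hylast : y (Fin.last e) = 0 := by
    rw [hydef]
    simp
  have hAy : A *ᵥ y = 0 := by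
    funext i
    rw [mulVec, dotProduct, Fin.sum_univ_castSucc, hylast, mul_zero, add_zero, Pi.zero_apply]
    simp only [hycast]
    by_cases hi : (i : ℕ) < e
    · have hm := hsum ⟨(i : ℕ) + 1, by omega⟩
      have hm0 : (Pi.single (0 : Fin (e+1)) (1:ℂ) : Fin (e+1) → ℂ) (⟨(i : ℕ) + 1, by omega⟩ : Fin (e+1)) = 0 := by
        rw [Pi.single_apply, if_neg]
        intro h
        have := congrArg Fin.val h
        simp at this
      rw [hm0] at hm
      rw [← hm]
      apply Finset.sum_congr rfl
      intro k _
      congr 2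
      simp only [hA, toeplitz, of_apply, Fin.coe_castSucc]
      congr 1
      push_cast
      ring
    · have hie : (i : ℕ) = e := by omega
      rw [← hc']
      apply Finset.sum_congr rfl
      intro k _
      congr 2
      simp only [hA, toeplitz, of_apply, Fin.coe_castSucc]
      congr 1
      rw [hie]
  have hy0 : y = 0 := by
    calc y = (A⁻¹ * A) *ᵥ y := by rw [nonsing_inv_mul A hu, one_mulVec]
    _ = A⁻¹ *ᵥ (A *ᵥ y) := by rw [mulVec_mulVec]
    _ = 0 := by rw [hAy, mulVec_zero]
  have hx : x = 0 := by
    funext i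
    refine Fin.cases hx0 (fun k => ?_) i
    rw [← hycast k, hy0]
    rfl
  rw [hx, mulVec_zero] at hAx
  have := congrFun hAx 0
  simp at this

lemma flip_dot {n : ℕ} (M : Matrix (Fin n) (Fin n) ℂ) (u v : Fin n → ℂ) :
    u ⬝ᵥ (M *ᵥ v) = v ⬝ᵥ (Mᵀ *ᵥ u) := by
  rw [dotProduct_mulVec v, vecMul_transpose, dotProduct_comm]

lemma toeplitz_transpose (d : ℕ) (t : ℤ → ℂ) :
    (toeplitz d t)ᵀ = toeplitz d (fun n => t (-n)) := by
  ext i j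
  simp only [transpose_apply, toeplitz, of_apply]
  congr 1
  ring

lemma key2 (d : ℕ) (t : ℤ → ℂ) (hd : 0 < d)
    (h1 : (toeplitz (d - 1) t).det = 0) (h2 : (toeplitz d t).det ≠ 0) :
    (fun i : Fin d => if (i : ℕ) = 0 then (1 : ℂ) else 0) ⬝ᵥ
      ((toeplitz d t)⁻¹ *ᵥ fun i : Fin d => if (i : ℕ) = 0 then 0 else t ((i : ℤ) - (d : ℤ))) ≠ 0 := by
  have h1' : (toeplitz (d - 1) (fun n => t (-n))).det = 0 := by
    rw [← toeplitz_transpose, det_transpose]; exact h1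
  have h2' : (toeplitz d (fun n => t (-n))).det ≠ 0 := by
    rw [← toeplitz_transpose, det_transpose]; exact h2
  have hk := key d (fun n => t (-n)) hd h1' h2'
  rw [flip_dot, transpose_nonsing_inv, toeplitz_transpose]
  convert hk using 2
  funext i
  by_cases h : (i : ℕ) = 0
  · simp [h]
  · simp only [h, if_false]
    congr 1
    ring

lemma main_calc (d : ℕ) (t : ℤ → ℂ) (γ δ : ℂ) (hd : 0 < d)
    [NeZero d] (hinv00 : (toeplitz d t)⁻¹ 0 0 = 0)
    (h2 : (toeplitz d t).det ≠ 0) :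
    (borderedToeplitz d t γ δ).det =
      -(toeplitz d t).det *
        (γ * ((fun i : Fin d => if (i : ℕ) = 0 then 0 else t ((d : ℤ) - (i : ℤ))) ⬝ᵥ
            ((toeplitz d t)⁻¹ *ᵥ fun i : Fin d => if (i : ℕ) = 0 then 1 else 0)) +
          δ * ((fun i : Fin d => if (i : ℕ) = 0 then (1 : ℂ) else 0) ⬝ᵥ
            ((toeplitz d t)⁻¹ *ᵥ fun i : Fin d => if (i : ℕ) = 0 then 0 else t ((i : ℤ) - (d : ℤ)))) +
          ((fun i : Fin d => if (i : ℕ) = 0 then 0 else t ((d : ℤ) - (i : ℤ))) ⬝ᵥ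
            ((toeplitz d t)⁻¹ *ᵥ fun i : Fin d => if (i : ℕ) = 0 then 0 else t ((i : ℤ) - (d : ℤ)))) -
          t 0) := by
  set A := toeplitz d t with hA
  have hu : IsUnit A.det := isUnit_iff_ne_zero.mpr h2
  haveI := A.invertibleOfIsUnitDet hu
  set Bm : Matrix (Fin d) (Fin 1) ℂ :=
    Matrix.of (fun i _ => if (i : ℕ) = 0 then γ else t ((i : ℤ) - (d : ℤ))) with hBm
  set Cm : Matrix (Fin 1) (Fin d) ℂ :=
    Matrix.of (fun _ j => if (j : ℕ) = 0 then δ else t ((d : ℤ) - (j : ℤ))) with hCm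
  set Dm : Matrix (Fin 1) (Fin 1) ℂ := Matrix.of (fun _ _ => t 0) with hDm
  have hsub : (borderedToeplitz d t γ δ).submatrix finSumFinEquiv finSumFinEquiv
      = fromBlocks A Bm Cm Dm := by
    ext i j
    cases i with
    | inl i =>
      cases j with
      | inl j =>
        simp only [submatrix_apply, finSumFinEquiv_apply_left, fromBlocks_apply₁₁,
          borderedToeplitz, of_apply, Fin.coe_castAdd]
        rw [if_neg (Nat.ne_of_lt i.isLt), if_neg (Nat.ne_of_lt j.isLt)]
        rfl
      | inr j =>
        have hj : j = 0 := Subsingleton.elim _ _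
        simp only [submatrix_apply, finSumFinEquiv_apply_left, finSumFinEquiv_apply_right,
          fromBlocks_apply₁₂, borderedToeplitz, of_apply, Fin.coe_castAdd, Fin.coe_natAdd, hj]
        rw [if_neg (Nat.ne_of_lt i.isLt), if_pos (by simp)]
        rfl
    | inr i =>
      have hi : i = 0 := Subsingleton.elim _ _
      cases j with
      | inl j =>
        simp only [submatrix_apply, finSumFinEquiv_apply_left, finSumFinEquiv_apply_right,
          fromBlocks_apply₂₁, borderedToeplitz, of_apply, Fin.coe_castAdd, Fin.coe_natAdd, hi]
        rw [if_pos (by simp)]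
        rfl
      | inr j =>
        have hj : j = 0 := Subsingleton.elim _ _
        simp only [submatrix_apply, finSumFinEquiv_apply_right,
          fromBlocks_apply₂₂, borderedToeplitz, of_apply, Fin.coe_natAdd, hi, hj]
        rw [if_pos (by simp), if_neg (by omega)]
        simp [hDm]
  have hdet : (borderedToeplitz d t γ δ).det = (fromBlocks A Bm Cm Dm).det := by
    rw [← hsub, det_submatrix_equiv_self]
  rw [hdet, det_fromBlocks₁₁, invOf_eq_nonsing_inv, det_fin_one, Matrix.sub_apply]
  have he0 : (fun i : Fin d => if (i : ℕ) = 0 then (1:ℂ) else 0) = Pi.single 0 1 := by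
    funext i
    rw [Pi.single_apply]
    simp only [Fin.ext_iff, Fin.val_zero]
  set u : Fin d → ℂ := fun i => if (i : ℕ) = 0 then 0 else t ((d : ℤ) - (i : ℤ)) with hu'
  set v : Fin d → ℂ := fun i => if (i : ℕ) = 0 then 0 else t ((i : ℤ) - (d : ℤ)) with hv'
  rw [he0]
  have hCrow : (fun j => Cm 0 j) = δ • (Pi.single (0 : Fin d) (1:ℂ) : Fin d → ℂ) + u := by
    funext j
    by_cases h : (j : ℕ) = 0
    · have hj0 : j = 0 := by rwa [Fin.ext_iff, Fin.val_zero]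
      simp [hCm, hu', hj0]
    · have hj0 : j ≠ 0 := by intro hj; exact h (by rw [hj, Fin.val_zero])
      simp [hCm, hu', h, Pi.single_apply, hj0]
  have hBcol : (fun k => Bm k 0) = γ • (Pi.single (0 : Fin d) (1:ℂ) : Fin d → ℂ) + v := by
    funext j
    by_cases h : (j : ℕ) = 0
    · have hj0 : j = 0 := by rwa [Fin.ext_iff, Fin.val_zero]
      simp [hBm, hv', hj0]
    · have hj0 : j ≠ 0 := by intro hj; exact h (by rw [hj, Fin.val_zero])
      simp [hBm, hv', h, Pi.single_apply, hj0]
  have hQ : (Cm * A⁻¹ * Bm) 0 0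
      = (fun j => Cm 0 j) ⬝ᵥ (A⁻¹ *ᵥ fun k => Bm k 0) := by
    rw [Matrix.mul_assoc]
    simp only [mul_apply, mulVec, dotProduct]
  rw [hQ, hCrow, hBcol, mulVec_add, mulVec_smul, add_dotProduct, dotProduct_add,
    dotProduct_add, smul_dotProduct, smul_dotProduct, dotProduct_smul, dotProduct_smul]
  have h00 : (Pi.single (0 : Fin d) (1:ℂ) : Fin d → ℂ) ⬝ᵥ (A⁻¹ *ᵥ Pi.single 0 1) = 0 := by
    rw [mulVec_single]
    simp [hinv00]
  rw [h00]
  have hDm00 : Dm 0 0 = t 0 := rfl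
  rw [hDm00]
  simp only [smul_eq_mul, mul_zero]
  ring


/-- Determinant of the bordered Toeplitz matrix: if `det 𝒯_{d-1} = 0` and `det 𝒯_d ≠ 0`, then
`det 𝒯_{d+1} = -det 𝒯_d · (γ·V_+ᵗ𝒯_d⁻¹e_0 + δ·e_0ᵗ𝒯_d⁻¹V_- + V_+ᵗ𝒯_d⁻¹V_- - t_0)`, and the
coefficients `V_+ᵗ𝒯_d⁻¹e_0` and `e_0ᵗ𝒯_d⁻¹V_-` of `γ` and `δ` are nonzero. -/
theorem bordered_toeplitz_det (d : ℕ) (t : ℤ → ℂ) (γ δ : ℂ)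
    (h1 : (toeplitz (d - 1) t).det = 0) (h2 : (toeplitz d t).det ≠ 0) :
    (borderedToeplitz d t γ δ).det =
      -(toeplitz d t).det *
        (γ * ((fun i : Fin d => if (i : ℕ) = 0 then 0 else t ((d : ℤ) - (i : ℤ))) ⬝ᵥ
            ((toeplitz d t)⁻¹ *ᵥ fun i : Fin d => if (i : ℕ) = 0 then 1 else 0)) +
          δ * ((fun i : Fin d => if (i : ℕ) = 0 then (1 : ℂ) else 0) ⬝ᵥ
            ((toeplitz d t)⁻¹ *ᵥ fun i : Fin d => if (i : ℕ) = 0 then 0 else t ((i : ℤ) - (d : ℤ)))) +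
          ((fun i : Fin d => if (i : ℕ) = 0 then 0 else t ((d : ℤ) - (i : ℤ))) ⬝ᵥ
            ((toeplitz d t)⁻¹ *ᵥ fun i : Fin d => if (i : ℕ) = 0 then 0 else t ((i : ℤ) - (d : ℤ)))) -
          t 0) ∧
    ((fun i : Fin d => if (i : ℕ) = 0 then 0 else t ((d : ℤ) - (i : ℤ))) ⬝ᵥ
        ((toeplitz d t)⁻¹ *ᵥ fun i : Fin d => if (i : ℕ) = 0 then 1 else 0)) ≠ 0 ∧
    ((fun i : Fin d => if (i : ℕ) = 0 then (1 : ℂ) else 0) ⬝ᵥ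
        ((toeplitz d t)⁻¹ *ᵥ fun i : Fin d => if (i : ℕ) = 0 then 0 else t ((i : ℤ) - (d : ℤ)))) ≠ 0 := by
  rcases Nat.eq_zero_or_pos d with hd0 | hd
  · exfalso
    subst hd0
    rw [show (0:ℕ) - 1 = 0 from rfl] at h1
    simp [Matrix.det_isEmpty] at h1
  have h1' : (toeplitz (d - 1) t).det = 0 := h1
  obtain ⟨e, rfl⟩ : ∃ e, d = e + 1 := ⟨d - 1, by omega⟩
  rw [show e + 1 - 1 = e from rfl] at h1'
  exact ⟨main_calc (e+1) t γ δ hd (inv00 e t h1') h2,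
    key (e+1) t hd h1 h2, key2 (e+1) t hd h1 h2⟩
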